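/- If a matrix A ∈ ℝ^{m×n} satisfies α‖x₁−x₂‖² ≤ ‖A(x₁−x₂)‖² ≤ β‖x₁−x₂‖² for all x₁, x₂ in a set S ⊆ ℝ^n with 0 < α < β, and x*, x_t, x_{t+1} ∈ S, then for the loss f(x) = ‖Ax − Ax*‖², step size η = 1/β, w_t = x_t − η Aᵀ(Ax_t − Ax*), and any x_{t+1} ∈ S satisfying ‖w_t − x_{t+1}‖² ≤ ‖x* − w_t‖² + δ, we have f(x_{t+1}) ≤ (β/α − 1) f(x_t) + βδ. -/

import Mathlib

open Matrix

private lemma rec_pgd_arith (α β δ c nu nv a b : ℝ) (hα : 0 < α) (hβ : 0 < β)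
    (key2 : β * nu + 2 * c ≤ β * nv - 2 * b + β * δ)
    (rec1 : a ≤ β * nu) (rec2 : α * nv ≤ b) :
    a + 2 * c + b ≤ (β / α - 1) * b + β * δ := by
  have h3 : β * nv ≤ (β / α) * b := by
    rw [div_mul_eq_mul_div, le_div_iff₀ hα]
    nlinarith
  nlinarith

theorem rec_pgd_one_step {m n : ℕ} (A : Matrix (Fin m) (Fin n) ℝ)
    (S : Set (EuclideanSpace ℝ (Fin n))) (α β δ η : ℝ)
    (hα : 0 < α) (hαβ : α < β) (hδ : 0 ≤ δ)
    (hREC : ∀ x₁ ∈ S, ∀ x₂ ∈ S,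
      α * ‖x₁ - x₂‖ ^ 2 ≤ ‖Matrix.toEuclideanLin A (x₁ - x₂)‖ ^ 2 ∧
      ‖Matrix.toEuclideanLin A (x₁ - x₂)‖ ^ 2 ≤ β * ‖x₁ - x₂‖ ^ 2)
    (xs xt xt1 : EuclideanSpace ℝ (Fin n))
    (hxs : xs ∈ S) (hxt : xt ∈ S) (hxt1 : xt1 ∈ S)
    (f : EuclideanSpace ℝ (Fin n) → ℝ)
    (hf : ∀ x, f x = ‖Matrix.toEuclideanLin A (x - xs)‖ ^ 2)
    (hη : η = 1 / β)
    (w : EuclideanSpace ℝ (Fin n))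
    (hw : w = xt - η • Matrix.toEuclideanLin Aᵀ (Matrix.toEuclideanLin A (xt - xs)))
    (hproj : ‖w - xt1‖ ^ 2 ≤ ‖xs - w‖ ^ 2 + δ) :
    f xt1 ≤ (β / α - 1) * f xt + β * δ := by
  have hβ : 0 < β := hα.trans hαβ
  set B := Matrix.toEuclideanLin A with hB
  have hT : Matrix.toEuclideanLin Aᵀ = LinearMap.adjoint B := by
    rw [hB, ← Matrix.toEuclideanLin_conjTranspose_eq_adjoint]
    congr 1
  have hadj : ∀ x y : EuclideanSpace ℝ (Fin n),
      (inner ℝ x (Matrix.toEuclideanLin Aᵀ (B y)) : ℝ) = inner ℝ (B x) (B y) := by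
    intro x y
    rw [hT, LinearMap.adjoint_inner_right]
  set u := xt1 - xt with hu
  set v := xt - xs with hv
  set T : EuclideanSpace ℝ (Fin n) := Matrix.toEuclideanLin Aᵀ (B v) with hTv
  have e1 : w - xt1 = -(u + η • T) := by rw [hw]; module
  have e2 : xs - w = η • T - v := by rw [hw]; module
  have n1 : ‖w - xt1‖ ^ 2 = ‖u‖ ^ 2 + 2 * (η * inner ℝ (B u) (B v)) + η ^ 2 * ‖T‖ ^ 2 := by
    rw [e1, norm_neg, norm_add_sq_real, real_inner_smul_right, hadj, norm_smul]
    simp [mul_pow, sq_abs]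
  have n2 : ‖xs - w‖ ^ 2 = η ^ 2 * ‖T‖ ^ 2 - 2 * (η * ‖B v‖ ^ 2) + ‖v‖ ^ 2 := by
    rw [e2, norm_sub_sq_real, real_inner_smul_left]
    have : (inner ℝ T v : ℝ) = ‖B v‖ ^ 2 := by
      rw [hTv, real_inner_comm, hadj, real_inner_self_eq_norm_sq]
    rw [this, norm_smul]
    simp [mul_pow, sq_abs]
  have key : ‖u‖ ^ 2 + 2 * (η * inner ℝ (B u) (B v)) ≤ ‖v‖ ^ 2 - 2 * (η * ‖B v‖ ^ 2) + δ := by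
    rw [n1, n2] at hproj; linarith
  have rec1 := (hREC xt1 hxt1 xt hxt).2
  rw [← hu] at rec1
  have rec2 := (hREC xt hxt xs hxs).1
  rw [← hv] at rec2
  have hft1 : f xt1 = ‖B u‖ ^ 2 + 2 * inner ℝ (B u) (B v) + ‖B v‖ ^ 2 := by
    rw [hf]
    have : xt1 - xs = u + v := by module
    rw [this, map_add, norm_add_sq_real]
  have hft : f xt = ‖B v‖ ^ 2 := by rw [hf]
  rw [hft1, hft]
  have hηβ : η * β = 1 := by rw [hη]; field_simp
  -- multiply key by β
  have key2 : β * ‖u‖ ^ 2 + 2 * (inner ℝ (B u) (B v) : ℝ) ≤ β * ‖v‖ ^ 2 - 2 * ‖B v‖ ^ 2 + β * δ := by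
    have h := mul_le_mul_of_nonneg_left key (le_of_lt hβ)
    have eL : β * (‖u‖ ^ 2 + 2 * (η * (inner ℝ (B u) (B v) : ℝ)))
        = β * ‖u‖ ^ 2 + 2 * (inner ℝ (B u) (B v) : ℝ) := by
      linear_combination (2 * (inner ℝ (B u) (B v) : ℝ)) * hηβ
    have eR : β * (‖v‖ ^ 2 - 2 * (η * ‖B v‖ ^ 2) + δ)
        = β * ‖v‖ ^ 2 - 2 * ‖B v‖ ^ 2 + β * δ := by
      linear_combination (-(2 * ‖B v‖ ^ 2)) * hηβ
    rw [eL, eR] at h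
    exact h
  exact rec_pgd_arith α β δ _ _ _ _ _ hα hβ key2 rec1 rec2
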